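/- Let r ≥ 0 and let ν : X → Measure X assign to each x a measure concentrated on the closed ball of radius r around x, i.e. ν(x)({x' | d(x', x) > r}) = 0 for every x. Then for every t ≥ 0, the relaxed global robustness risk is bounded by the strict one: D({x | ν(x)({x' | f(x') ≠ c(x)}) > t}) ≤ D(V₁(r)). -/

import Mathlib

open MeasureTheory ENNReal
open scoped ENNReal

/-- If each local perturbation measure `ν x` is concentrated on the closed ball of
radius `r` around `x`, then for every threshold `t`, the relaxed global robustness
risk is bounded by the strict one: `D({x | ν(x)({x' | f x' ≠ c x}) > t}) ≤ D(V₁(r))`. -/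
theorem relaxed_risk_le_strict_risk
    {m n : ℕ} (D : Measure (EuclideanSpace ℝ (Fin m))) [IsProbabilityMeasure D]
    (f c : EuclideanSpace ℝ (Fin m) → Fin n) (r : ℝ) (hr : 0 ≤ r)
    (ν : EuclideanSpace ℝ (Fin m) → Measure (EuclideanSpace ℝ (Fin m)))
    (hν : ∀ x, ν x {x' | r < dist x' x} = 0)
    (t : ℝ≥0∞) :
    D {x | t < ν x {x' | f x' ≠ c x}} ≤
      D {x | ∃ x', dist x' x ≤ r ∧ f x' ≠ c x} := by
  apply measure_mono
  intro x hx
  by_contra h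
  simp only [Set.mem_setOf_eq, not_exists, not_and, not_not] at h
  have hzero : ν x {x' | f x' ≠ c x} = 0 := by
    refine measure_mono_null ?_ (hν x)
    intro x' hx'
    by_contra hd
    simp only [Set.mem_setOf_eq, not_lt] at hd
    exact hx' (h x' hd)
  simp only [Set.mem_setOf_eq, hzero] at hx
  exact (not_lt.2 (zero_le : 0 ≤ t)) hx
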